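/- Let K be a number field with ring of integers O_K and 𝔫 a nonzero ideal. Let 𝔞, 𝔟 be ideals dividing 𝔫 and u, v ∈ O_K. Then the number of units a of O_K/𝔫 with a ≡ u (mod 𝔞) and a ≡ v (mod 𝔟) equals φ(𝔫)/φ(lcm(𝔞,𝔟)) if u is coprime to 𝔞, v is coprime to 𝔟, and u ≡ v (mod gcd(𝔞,𝔟)); otherwise it equals 0. -/

import Mathlib

open NumberField

set_option synthInstance.maxHeartbeats 1000000
set_option maxHeartbeats 1000000


section aux

variable {R : Type*} [CommRing R]

lemma aux_isUnit_mk_iff (I : Ideal R) (x : R) :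
    IsUnit (Ideal.Quotient.mk I x) ↔ Ideal.span {x} ⊔ I = ⊤ := by
  constructor
  · intro h
    obtain ⟨b, hb⟩ := h.exists_right_inv
    obtain ⟨c, rfl⟩ := Ideal.Quotient.mk_surjective b
    rw [← _root_.map_mul _ _ _, ← map_one (Ideal.Quotient.mk I), Ideal.Quotient.mk_eq_mk_iff_sub_mem] at hb
    rw [Ideal.eq_top_iff_one]
    have h1 : x * c ∈ Ideal.span {x} := Ideal.mem_span_singleton.2 ⟨c, rfl⟩
    have : (1 : R) = x * c - (x * c - 1) := by ring
    rw [this]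
    exact Submodule.sub_mem_sup h1 hb
  · intro h
    have h1 : (1 : R) ∈ Ideal.span {x} ⊔ I := h ▸ Submodule.mem_top
    obtain ⟨p, hp, q, hq, hpq⟩ := Submodule.mem_sup.mp h1
    obtain ⟨d, rfl⟩ := Ideal.mem_span_singleton.mp hp
    refine IsUnit.of_mul_eq_one (Ideal.Quotient.mk I d) ?_
    rw [← _root_.map_mul _ _ _, ← map_one (Ideal.Quotient.mk I), Ideal.Quotient.mk_eq_mk_iff_sub_mem]
    have : x * d - 1 = -q := by rw [← hpq]; ring
    rw [this]
    exact I.neg_mem hq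

lemma aux_span_sup_le (I : Ideal R) {y u : R} (h : y - u ∈ I) :
    Ideal.span {y} ⊔ I ≤ Ideal.span {u} ⊔ I := by
  refine sup_le ?_ le_sup_right
  rw [Ideal.span_le, Set.singleton_subset_iff]
  have : y = u + (y - u) := by ring
  rw [this]
  exact Submodule.add_mem_sup (Ideal.mem_span_singleton_self u) h

lemma aux_span_sup_eq (I : Ideal R) {y u : R} (h : y - u ∈ I) :
    Ideal.span {y} ⊔ I = Ideal.span {u} ⊔ I :=
  le_antisymm (aux_span_sup_le I h) (aux_span_sup_le I (by simpa using I.neg_mem h))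

end aux

lemma aux_exists_coprime_lift {R : Type*} [CommRing R] [IsDedekindDomain R]
    {𝔫 𝔠 : Ideal R} (h𝔫 : 𝔫 ≠ ⊥) {x : R} (hx : Ideal.span {x} ⊔ 𝔠 = ⊤) :
    ∃ y : R, y - x ∈ 𝔠 ∧ Ideal.span {y} ⊔ 𝔫 = ⊤ := by
  classical
  have hfin : {J : Ideal R | J ∣ 𝔫}.Finite := by
    haveI := UniqueFactorizationMonoid.fintypeSubtypeDvd 𝔫 h𝔫
    exact Set.finite_coe_iff.mp (Finite.of_fintype {J : Ideal R // J ∣ 𝔫})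
  have hTfin : {𝔪 : Ideal R | 𝔪.IsMaximal ∧ 𝔫 ≤ 𝔪 ∧ ¬ 𝔠 ≤ 𝔪}.Finite := by
    refine hfin.subset ?_
    rintro 𝔪 ⟨h1, h2, -⟩
    exact Ideal.dvd_iff_le.mpr h2
  set T : Finset (Ideal R) := hTfin.toFinset with hT
  set J : Ideal R := T.prod id with hJ
  have hcJ : 𝔠 ⊔ J = ⊤ := by
    refine Ideal.sup_prod_eq_top ?_
    intro 𝔪 h𝔪
    rw [hT, Set.Finite.mem_toFinset] at h𝔪
    obtain ⟨hmax, -, hnle⟩ := h𝔪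
    by_contra hne
    have := hmax.eq_of_le hne le_sup_right
    exact hnle (le_sup_left.trans (le_of_eq this.symm))
  have h1 : (1 : R) ∈ 𝔠 ⊔ J := hcJ ▸ Submodule.mem_top
  obtain ⟨c, hc, j, hj, hcj⟩ := Submodule.mem_sup.mp h1
  refine ⟨x + c * (1 - x), by simpa using 𝔠.mul_mem_right _ hc, ?_⟩
  by_contra hne
  obtain ⟨𝔪, hmax, hle⟩ := Ideal.exists_le_maximal _ hne
  have hy𝔪 : x + c * (1 - x) ∈ 𝔪 :=
    hle (le_sup_left (a := Ideal.span {x + c * (1 - x)}) (Ideal.mem_span_singleton_self _))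
  have h𝔫𝔪 : 𝔫 ≤ 𝔪 := le_sup_right.trans hle
  by_cases hc𝔪 : 𝔠 ≤ 𝔪
  · have hx𝔪 : x ∈ 𝔪 := by
      have : x = (x + c * (1 - x)) - c * (1 - x) := by ring
      rw [this]
      exact 𝔪.sub_mem hy𝔪 (hc𝔪 (𝔠.mul_mem_right _ hc))
    have : Ideal.span {x} ⊔ 𝔠 ≤ 𝔪 := sup_le (by rwa [Ideal.span_le, Set.singleton_subset_iff]) hc𝔪
    rw [hx] at this
    exact hmax.ne_top (top_le_iff.mp this)
  · have h𝔪T : 𝔪 ∈ T := by rw [hT, Set.Finite.mem_toFinset]; exact ⟨hmax, h𝔫𝔪, hc𝔪⟩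
    have hJ𝔪 : J ≤ 𝔪 := Ideal.prod_le_inf.trans (Finset.inf_le h𝔪T)
    have hsub : x + c * (1 - x) - 1 ∈ 𝔪 := by
      have : x + c * (1 - x) - 1 = -((1 - x) * j) := by
        have : j = 1 - c := by rw [← hcj]; ring
        rw [this]; ring
      rw [this]
      exact 𝔪.neg_mem (hJ𝔪 (J.mul_mem_left _ hj))
    have : (1 : R) ∈ 𝔪 := by
      have h1' : (1 : R) = (x + c * (1 - x)) - (x + c * (1 - x) - 1) := by ring
      rw [h1']
      exact 𝔪.sub_mem hy𝔪 hsub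
    exact hmax.ne_top ((Ideal.eq_top_iff_one _).mpr this)

lemma aux_card_fiber {G H : Type*} [Group G] [Group H] [Finite G] [Finite H]
    (φ : G →* H) (hs : Function.Surjective φ) (h : H) :
    (Nat.card {g : G // φ g = h} : ℚ) = (Nat.card G : ℚ) / (Nat.card H : ℚ) := by
  classical
  obtain ⟨a₀, ha₀⟩ := hs h
  have e : {g : G // φ g = h} ≃ φ.ker := by
    refine ⟨fun g => ⟨a₀⁻¹ * g.1, ?_⟩, fun k => ⟨a₀ * k.1, ?_⟩, ?_, ?_⟩
    · simp [MonoidHom.mem_ker, _root_.map_mul, ha₀, g.2]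
    · have := k.2
      rw [MonoidHom.mem_ker] at this
      simp [_root_.map_mul, this, ha₀]
    · intro g; ext; simp
    · intro k; ext; simp
  rw [Nat.card_congr e]
  have hGH : Nat.card G = Nat.card H * Nat.card φ.ker := by
    rw [← Nat.card_congr (QuotientGroup.quotientKerEquivOfSurjective φ hs).toEquiv]
    exact Subgroup.card_eq_card_quotient_mul_card_subgroup φ.ker
  have hH : (Nat.card H : ℚ) ≠ 0 := by
    simp [Nat.card_pos.ne']
  rw [hGH]
  push_cast
  field_simp


open Classical in
/-- For a nonzero ideal `𝔫` of `𝓞 K`, ideals `𝔞, 𝔟 ∣ 𝔫` and `u, v ∈ 𝓞 K`, the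
number of units `a` of `𝓞 K ⧸ 𝔫` with `a ≡ u (mod 𝔞)` and `a ≡ v (mod 𝔟)` equals
`φ(𝔫)/φ(lcm(𝔞,𝔟))` if `u` is coprime to `𝔞`, `v` is coprime to `𝔟` and
`u ≡ v (mod gcd(𝔞,𝔟))`, and `0` otherwise.  (Here `lcm(𝔞,𝔟) = 𝔞 ⊓ 𝔟` and
`gcd(𝔞,𝔟) = 𝔞 ⊔ 𝔟`.) -/
theorem count_units_congruent_pair (K : Type*) [Field K] [NumberField K]
    (𝔫 𝔞 𝔟 : Ideal (𝓞 K)) (h𝔫 : 𝔫 ≠ ⊥) (h𝔞 : 𝔞 ∣ 𝔫) (h𝔟 : 𝔟 ∣ 𝔫) (u v : 𝓞 K) :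
    (Nat.card {a : (𝓞 K ⧸ 𝔫)ˣ //
        ∀ y : 𝓞 K, Ideal.Quotient.mk 𝔫 y = (a : 𝓞 K ⧸ 𝔫) →
          Ideal.Quotient.mk 𝔞 y = Ideal.Quotient.mk 𝔞 u ∧
          Ideal.Quotient.mk 𝔟 y = Ideal.Quotient.mk 𝔟 v} : ℚ) =
      if Ideal.span {u} ⊔ 𝔞 = ⊤ ∧ Ideal.span {v} ⊔ 𝔟 = ⊤ ∧
          Ideal.Quotient.mk (𝔞 ⊔ 𝔟) u = Ideal.Quotient.mk (𝔞 ⊔ 𝔟) v then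
        (Nat.card ((𝓞 K ⧸ 𝔫)ˣ) : ℚ) / (Nat.card ((𝓞 K ⧸ (𝔞 ⊓ 𝔟))ˣ) : ℚ)
      else 0 := by
  have h𝔞le : 𝔫 ≤ 𝔞 := Ideal.le_of_dvd h𝔞
  have h𝔟le : 𝔫 ≤ 𝔟 := Ideal.le_of_dvd h𝔟
  have h𝔠le : 𝔫 ≤ 𝔞 ⊓ 𝔟 := le_inf h𝔞le h𝔟le
  have h𝔠ne : 𝔞 ⊓ 𝔟 ≠ ⊥ := fun h => h𝔫 (le_bot_iff.mp (h ▸ h𝔠le))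
  haveI : Fintype (𝓞 K ⧸ 𝔫) := @Fintype.ofFinite _ (Ideal.finiteQuotientOfFreeOfNeBot 𝔫 h𝔫)
  haveI : Fintype (𝓞 K ⧸ (𝔞 ⊓ 𝔟)) := @Fintype.ofFinite _ (Ideal.finiteQuotientOfFreeOfNeBot _ h𝔠ne)
  by_cases hcond : Ideal.span {u} ⊔ 𝔞 = ⊤ ∧ Ideal.span {v} ⊔ 𝔟 = ⊤ ∧
      Ideal.Quotient.mk (𝔞 ⊔ 𝔟) u = Ideal.Quotient.mk (𝔞 ⊔ 𝔟) v
  · rw [if_pos hcond]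
    obtain ⟨hu, hv, huv⟩ := hcond
    have huv' : u - v ∈ 𝔞 ⊔ 𝔟 := (Ideal.Quotient.mk_eq_mk_iff_sub_mem u v).mp huv
    obtain ⟨p, hp, q, hq, hpq⟩ := Submodule.mem_sup.mp huv'
    set w : 𝓞 K := u - p with hw
    have hwu : w - u ∈ 𝔞 := by rw [hw]; simpa using 𝔞.neg_mem hp
    have hwv : w - v ∈ 𝔟 := by
      have : w - v = q := by rw [hw]; linear_combination -hpq
      rw [this]; exact hq
    have hw𝔞 : Ideal.span {w} ⊔ 𝔞 = ⊤ := (aux_span_sup_eq 𝔞 hwu).trans hu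
    have hw𝔟 : Ideal.span {w} ⊔ 𝔟 = ⊤ := (aux_span_sup_eq 𝔟 hwv).trans hv
    have hw𝔠 : Ideal.span {w} ⊔ (𝔞 ⊓ 𝔟) = ⊤ := by
      have c𝔞 : IsCoprime (Ideal.span {w}) 𝔞 := (Ideal.isCoprime_iff_sup_eq).mpr hw𝔞
      have c𝔟 : IsCoprime (Ideal.span {w}) 𝔟 := (Ideal.isCoprime_iff_sup_eq).mpr hw𝔟
      have := (Ideal.isCoprime_iff_sup_eq).mp (c𝔞.mul_right c𝔟)
      rw [eq_top_iff, ← this]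
      exact sup_le_sup_left Ideal.mul_le_inf _
    set φ : (𝓞 K ⧸ 𝔫)ˣ →* (𝓞 K ⧸ (𝔞 ⊓ 𝔟))ˣ :=
      Units.map (Ideal.Quotient.factor h𝔠le).toMonoidHom with hφ
    have hφcoe : ∀ a : (𝓞 K ⧸ 𝔫)ˣ, ∀ y : 𝓞 K, Ideal.Quotient.mk 𝔫 y = ↑a →
        (↑(φ a) : 𝓞 K ⧸ (𝔞 ⊓ 𝔟)) = Ideal.Quotient.mk (𝔞 ⊓ 𝔟) y := by
      intro a y hy
      rw [hφ, Units.coe_map, ← hy]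
      exact Ideal.Quotient.factor_mk _ _
    have hsurj : Function.Surjective φ := by
      intro z
      obtain ⟨x, hx⟩ := Ideal.Quotient.mk_surjective (z : 𝓞 K ⧸ (𝔞 ⊓ 𝔟))
      have hxu : Ideal.span {x} ⊔ (𝔞 ⊓ 𝔟) = ⊤ :=
        (aux_isUnit_mk_iff _ _).mp (hx ▸ z.isUnit)
      obtain ⟨y, hy𝔠, hy𝔫⟩ := aux_exists_coprime_lift h𝔫 hxu
      have hyu : IsUnit (Ideal.Quotient.mk 𝔫 y) := (aux_isUnit_mk_iff _ _).mpr hy𝔫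
      refine ⟨hyu.unit, Units.ext ?_⟩
      rw [hφcoe hyu.unit y hyu.unit_spec, (Ideal.Quotient.mk_eq_mk_iff_sub_mem y x).mpr hy𝔠, hx]
    have hwu' : IsUnit (Ideal.Quotient.mk (𝔞 ⊓ 𝔟) w) := (aux_isUnit_mk_iff _ _).mpr hw𝔠
    have hiff : ∀ a : (𝓞 K ⧸ 𝔫)ˣ,
        (∀ y : 𝓞 K, Ideal.Quotient.mk 𝔫 y = (a : 𝓞 K ⧸ 𝔫) →
          Ideal.Quotient.mk 𝔞 y = Ideal.Quotient.mk 𝔞 u ∧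
          Ideal.Quotient.mk 𝔟 y = Ideal.Quotient.mk 𝔟 v) ↔ φ a = hwu'.unit := by
      intro a
      obtain ⟨y, hy⟩ := Ideal.Quotient.mk_surjective (a : 𝓞 K ⧸ 𝔫)
      constructor
      · intro h
        obtain ⟨h1, h2⟩ := h y hy
        refine Units.ext ?_
        rw [hφcoe a y hy, hwu'.unit_spec]
        refine (Ideal.Quotient.mk_eq_mk_iff_sub_mem y w).mpr (Submodule.mem_inf.mpr ⟨?_, ?_⟩)
        · have : y - w = (y - u) - (w - u) := by ring
          rw [this]
          exact 𝔞.sub_mem ((Ideal.Quotient.mk_eq_mk_iff_sub_mem y u).mp h1) hwu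
        · have : y - w = (y - v) - (w - v) := by ring
          rw [this]
          exact 𝔟.sub_mem ((Ideal.Quotient.mk_eq_mk_iff_sub_mem y v).mp h2) hwv
      · intro h y' hy'
        have hy'y : y' - y ∈ 𝔫 :=
          (Ideal.Quotient.mk_eq_mk_iff_sub_mem y' y).mp (hy'.trans hy.symm)
        have hyw : y - w ∈ 𝔞 ⊓ 𝔟 := by
          refine (Ideal.Quotient.mk_eq_mk_iff_sub_mem y w).mp ?_
          rw [← hφcoe a y hy, h, hwu'.unit_spec]
        obtain ⟨hyw𝔞, hyw𝔟⟩ := Submodule.mem_inf.mp hyw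
        constructor
        · refine (Ideal.Quotient.mk_eq_mk_iff_sub_mem y' u).mpr ?_
          have : y' - u = (y' - y) + (y - w) + (w - u) := by ring
          rw [this]
          exact 𝔞.add_mem (𝔞.add_mem (h𝔞le hy'y) hyw𝔞) hwu
        · refine (Ideal.Quotient.mk_eq_mk_iff_sub_mem y' v).mpr ?_
          have : y' - v = (y' - y) + (y - w) + (w - v) := by ring
          rw [this]
          exact 𝔟.add_mem (𝔟.add_mem (h𝔟le hy'y) hyw𝔟) hwv
    rw [Nat.card_congr (Equiv.subtypeEquivRight hiff)]
    exact aux_card_fiber φ hsurj hwu'.unit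
  · rw [if_neg hcond]
    rw [show ((0 : ℚ)) = ((0 : ℕ) : ℚ) by norm_num, Nat.cast_inj, Nat.card_eq_zero]
    left
    constructor
    rintro ⟨a, ha⟩
    obtain ⟨y, hy⟩ := Ideal.Quotient.mk_surjective (a : 𝓞 K ⧸ 𝔫)
    obtain ⟨h1, h2⟩ := ha y hy
    have hyn : Ideal.span {y} ⊔ 𝔫 = ⊤ := (aux_isUnit_mk_iff _ _).mp (hy ▸ a.isUnit)
    have hy𝔞 : Ideal.span {y} ⊔ 𝔞 = ⊤ := by
      rw [eq_top_iff, ← hyn]; exact sup_le_sup_left h𝔞le _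
    have hy𝔟 : Ideal.span {y} ⊔ 𝔟 = ⊤ := by
      rw [eq_top_iff, ← hyn]; exact sup_le_sup_left h𝔟le _
    have hyu : y - u ∈ 𝔞 := (Ideal.Quotient.mk_eq_mk_iff_sub_mem y u).mp h1
    have hyv : y - v ∈ 𝔟 := (Ideal.Quotient.mk_eq_mk_iff_sub_mem y v).mp h2
    refine hcond ⟨(aux_span_sup_eq 𝔞 hyu).symm.trans hy𝔞,
      (aux_span_sup_eq 𝔟 hyv).symm.trans hy𝔟, ?_⟩
    rw [Ideal.Quotient.mk_eq_mk_iff_sub_mem]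
    have : u - v = (y - v) - (y - u) := by ring
    rw [this]
    exact sub_mem (le_sup_right (a := 𝔞) hyv) (le_sup_left (b := 𝔟) hyu)
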